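/- Let D₁ and D₂ be independent random variables, each exponentially distributed with rate 1. Then there exists t₀ ∈ (0,1) such that for all t ∈ (0, t₀), F_{D₁+D₂}⁻¹(t) > F_{D₁}⁻¹(t) + F_{D₂}⁻¹(t) = 2·(−ln(1−t)); that is, contrary to the prevalent intuition, pooling two i.i.d. exponential demands leads to strictly higher inventory levels for all sufficiently small margin ratios. -/

import Mathlib

open MeasureTheory ProbabilityTheory Set Filter Topology

/-- The quantile function of a distribution on `ℝ`: `F⁻¹(t) = inf {x | t ≤ F(x)}`. -/
noncomputable def quantile (μ : Measure ℝ) (t : ℝ) : ℝ :=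
  sInf {x : ℝ | t ≤ cdf μ x}

lemma expMeasure_Iio_zero : expMeasure 1 (Set.Iio 0) = 0 := by
  rw [expMeasure, gammaMeasure, withDensity_apply _ measurableSet_Iio]
  exact lintegral_gammaPDF_of_nonpos le_rfl

lemma quantile_expMeasure {t : ℝ} (ht : t ∈ Set.Ioo (0:ℝ) 1) :
    quantile (expMeasure 1) t = -Real.log (1 - t) := by
  obtain ⟨ht0, ht1⟩ := ht
  have h1t : 0 < 1 - t := by linarith
  have hL : 0 < -Real.log (1 - t) := by
    have := Real.log_neg h1t (by linarith)
    linarith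
  have hset : {x : ℝ | t ≤ cdf (expMeasure 1) x} = Set.Ici (-Real.log (1 - t)) := by
    ext x
    rw [Set.mem_setOf_eq, cdf_expMeasure_eq one_pos, Set.mem_Ici]
    constructor
    · intro hx
      by_cases h0 : 0 ≤ x
      · rw [if_pos h0] at hx
        have hexp : Real.exp (-(1 * x)) ≤ 1 - t := by linarith
        rw [← Real.exp_log h1t] at hexp
        have := Real.exp_le_exp.mp hexp
        linarith
      · rw [if_neg h0] at hx; linarith
    · intro hx
      have h0 : 0 ≤ x := le_trans hL.le hx
      rw [if_pos h0]
      have : Real.exp (-(1 * x)) ≤ Real.exp (Real.log (1 - t)) := by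
        apply Real.exp_le_exp.mpr; linarith
      rw [Real.exp_log h1t] at this
      linarith
  rw [quantile, hset, csInf_Ici]

/-- Pooling two i.i.d. rate-one exponential demands leads to strictly higher inventory
levels for all sufficiently small margin ratios; the dedicated level is `2·(−ln(1−t))`. -/
theorem exponential_pooling_anomaly {Ω : Type*} [MeasurableSpace Ω]
    (P : Measure Ω) [IsProbabilityMeasure P] (D₁ D₂ : Ω → ℝ)
    (hD₁ : Measurable D₁) (hD₂ : Measurable D₂)
    (hind : IndepFun D₁ D₂ P)
    (h₁ : Measure.map D₁ P = expMeasure 1) (h₂ : Measure.map D₂ P = expMeasure 1) :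
    ∃ t₀ ∈ Set.Ioo (0 : ℝ) 1, ∀ t ∈ Set.Ioo (0 : ℝ) t₀,
      quantile (Measure.map D₁ P) t + quantile (Measure.map D₂ P) t <
        quantile (Measure.map (fun ω => D₁ ω + D₂ ω) P) t ∧
      quantile (Measure.map D₁ P) t + quantile (Measure.map D₂ P) t =
        2 * (-Real.log (1 - t)) := by
  refine ⟨1/4, ⟨by norm_num, by norm_num⟩, fun t ht => ?_⟩
  obtain ⟨ht0, ht4⟩ := ht
  have ht1 : t < 1 := by linarith
  have htIoo : t ∈ Set.Ioo (0:ℝ) 1 := ⟨ht0, ht1⟩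
  have h1t : 0 < 1 - t := by linarith
  set s : ℝ := -Real.log (1 - t) with hs
  have hLsum : quantile (Measure.map D₁ P) t + quantile (Measure.map D₂ P) t = 2 * s := by
    rw [h₁, h₂, quantile_expMeasure htIoo]; ring
  refine ⟨?_, hLsum⟩
  rw [hLsum]
  -- key facts
  have hexp2s : Real.exp (-(2 * s)) = (1 - t)^2 := by
    rw [show -(2*s) = 2 * Real.log (1-t) by rw [hs]; ring,
      show (2:ℝ) * Real.log (1-t) = Real.log (1-t) + Real.log (1-t) by ring,
      Real.exp_add, Real.exp_log h1t, sq]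
  set μ := Measure.map (fun ω => D₁ ω + D₂ ω) P with hμ
  have hsum_meas : Measurable (fun ω => D₁ ω + D₂ ω) := hD₁.add hD₂
  have hprob : IsProbabilityMeasure μ := Measure.isProbabilityMeasure_map hsum_meas.aemeasurable
  -- negativity null sets
  have hneg₁ : P (D₁ ⁻¹' Set.Iio 0) = 0 := by
    rw [← Measure.map_apply hD₁ measurableSet_Iio, h₁]; exact expMeasure_Iio_zero
  have hneg₂ : P (D₂ ⁻¹' Set.Iio 0) = 0 := by
    rw [← Measure.map_apply hD₂ measurableSet_Iio, h₂]; exact expMeasure_Iio_zero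
  -- cdf bound at 2s
  haveI : IsProbabilityMeasure (expMeasure 1) := isProbabilityMeasure_expMeasure one_pos
  have hIic : ∀ (D : Ω → ℝ), Measurable D → Measure.map D P = expMeasure 1 →
      P (D ⁻¹' Set.Iic (2*s)) = ENNReal.ofReal (1 - (1-t)^2) := by
    intro D hD hmap
    rw [← Measure.map_apply hD measurableSet_Iic, hmap, ← ofReal_cdf,
      cdf_expMeasure_eq one_pos]
    have hs0 : 0 ≤ 2 * s := by
      have := Real.log_neg h1t (by linarith)
      rw [hs]; linarith
    rw [if_pos hs0, one_mul, hexp2s]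
  have hsub : {ω | D₁ ω + D₂ ω ≤ 2*s} ⊆
      (D₁ ⁻¹' Set.Iic (2*s) ∩ D₂ ⁻¹' Set.Iic (2*s)) ∪ (D₁ ⁻¹' Set.Iio 0 ∪ D₂ ⁻¹' Set.Iio 0) := by
    intro ω hω
    simp only [Set.mem_setOf_eq] at hω
    by_cases h1 : D₁ ω < 0
    · exact Or.inr (Or.inl h1)
    by_cases h2 : D₂ ω < 0
    · exact Or.inr (Or.inr h2)
    push_neg at h1 h2
    exact Or.inl ⟨by simp only [Set.mem_preimage, Set.mem_Iic]; linarith,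
      by simp only [Set.mem_preimage, Set.mem_Iic]; linarith⟩
  have hcdf_bound : cdf μ (2*s) ≤ (1 - (1-t)^2)^2 := by
    rw [cdf_eq_real, measureReal_def, hμ, Measure.map_apply hsum_meas measurableSet_Iic]
    have hmeas_le : P ((fun ω => D₁ ω + D₂ ω) ⁻¹' Set.Iic (2*s)) ≤
        ENNReal.ofReal ((1 - (1-t)^2)^2) := by
      calc P ((fun ω => D₁ ω + D₂ ω) ⁻¹' Set.Iic (2*s))
          ≤ P ((D₁ ⁻¹' Set.Iic (2*s) ∩ D₂ ⁻¹' Set.Iic (2*s)) ∪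
              (D₁ ⁻¹' Set.Iio 0 ∪ D₂ ⁻¹' Set.Iio 0)) := measure_mono hsub
        _ = P (D₁ ⁻¹' Set.Iic (2*s) ∩ D₂ ⁻¹' Set.Iic (2*s)) := by
            refine le_antisymm ((measure_union_le _ _).trans ?_)
              (measure_mono Set.subset_union_left)
            rw [measure_union_null hneg₁ hneg₂, add_zero]
        _ = P (D₁ ⁻¹' Set.Iic (2*s)) * P (D₂ ⁻¹' Set.Iic (2*s)) :=
            hind.measure_inter_preimage_eq_mul _ _ measurableSet_Iic measurableSet_Iic
        _ = ENNReal.ofReal ((1 - (1-t)^2)^2) := by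
            rw [hIic D₁ hD₁ h₁, hIic D₂ hD₂ h₂, ← ENNReal.ofReal_mul (by nlinarith), ← sq]
    calc (P ((fun ω => D₁ ω + D₂ ω) ⁻¹' Set.Iic (2*s))).toReal
        ≤ (ENNReal.ofReal ((1 - (1-t)^2)^2)).toReal :=
          ENNReal.toReal_mono ENNReal.ofReal_ne_top hmeas_le
      _ = (1 - (1-t)^2)^2 := ENNReal.toReal_ofReal (by nlinarith)
  have hpoly : (1 - (1-t)^2)^2 < t := by
    have h2t : t * (2-t)^2 < 1 := by nlinarith
    calc (1 - (1-t)^2)^2 = t * (t * (2-t)^2) := by ring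
      _ < t * 1 := by exact mul_lt_mul_of_pos_left h2t ht0
      _ = t := mul_one t
  have hcdf_lt : cdf μ (2*s) < t := lt_of_le_of_lt hcdf_bound hpoly
  -- right continuity: find y > 2s with cdf μ y < t
  have hrc : ContinuousWithinAt (cdf μ) (Set.Ici (2*s)) (2*s) := (cdf μ).right_continuous _
  have hev : ∀ᶠ y in 𝓝[>] (2*s), cdf μ y < t := by
    have : ∀ᶠ y in 𝓝[Set.Ici (2*s)] (2*s), cdf μ y < t :=
      hrc.eventually_lt continuousWithinAt_const hcdf_lt
    exact this.filter_mono (nhdsWithin_mono _ Set.Ioi_subset_Ici_self)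
  obtain ⟨y, hy_lt, hy_mem⟩ := (hev.and self_mem_nhdsWithin).exists
  -- quantile lower bound
  have hnonempty : {x : ℝ | t ≤ cdf μ x}.Nonempty := by
    have := tendsto_cdf_atTop (μ := μ)
    obtain ⟨x, hx⟩ := (this.eventually_const_le ht1).exists
    exact ⟨x, hx⟩
  have hlb : ∀ x ∈ {x : ℝ | t ≤ cdf μ x}, y ≤ x := by
    intro x hx
    by_contra h
    push_neg at h
    exact absurd (le_trans hx ((cdf μ).mono h.le)) (not_le.mpr hy_lt)
  calc 2 * s < y := hy_mem
    _ ≤ sInf {x : ℝ | t ≤ cdf μ x} := le_csInf hnonempty hlb
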